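/- arXiv:2202.06141 — 3 statements merged into one kernel-verified Lean document; each statement's English description precedes it below -/
import Mathlib

section
/- Assume κ > β + √d·α/2. Then for all w in the closed l∞-ball B̄_β, the gradient of the smoothed function satisfies ∇f_α(w) ∈ closure(convexHull{∇f(x) : x ∈ B̄(w, √d·α/2) and f is differentiable at x}), where B̄(w,r) denotes the closed Euclidean ball of radius r centered at w. -/
open MeasureTheory Filter
open scoped Classical BigOperators Topology

noncomputable section

/-- The closed `l∞`-ball of radius `r` centered at `0` in `ℝ^d`. -/
def Binf (d : ℕ) (r : ℝ) : Set (EuclideanSpace ℝ (Fin d)) := {z | ∀ i, |z i| ≤ r}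

/-- The uniform probability distribution on the closed `l∞`-ball of radius `r` in `ℝ^d`. -/
def unifMeas (d : ℕ) (r : ℝ) : Measure (EuclideanSpace ℝ (Fin d)) :=
  (volume (Binf d r))⁻¹ • volume.restrict (Binf d r)

/-- The point `w + u` with its `i`-th coordinate replaced by `w i + s`. -/
def shiftPt {d : ℕ} (s : ℝ) (w u : EuclideanSpace ℝ (Fin d)) (i : Fin d) :
    EuclideanSpace ℝ (Fin d) :=
  w + u + (s - u i) • EuclideanSpace.single i (1 : ℝ)

/-- The finite difference `df_i(w, u_{∖i})` of a function `f : ℝ^d → ℝ`. -/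
def dfFD {d : ℕ} (α : ℝ) (f : EuclideanSpace ℝ (Fin d) → ℝ)
    (i : Fin d) (w u : EuclideanSpace ℝ (Fin d)) : ℝ :=
  f (shiftPt (α / 2) w u i) - f (shiftPt (-(α / 2)) w u i)

/-- The finite-difference vector `dF(w,u,ξ)` whose `i`-th component is
`F(…, w_i + α/2, …, ξ) − F(…, w_i − α/2, …, ξ)`. -/
def dFvec {d p : ℕ} (α : ℝ)
    (F : EuclideanSpace ℝ (Fin d) → EuclideanSpace ℝ (Fin p) → ℝ)
    (w u : EuclideanSpace ℝ (Fin d)) (ξ : EuclideanSpace ℝ (Fin p)) :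
    EuclideanSpace ℝ (Fin d) :=
  ∑ i : Fin d,
    (F (shiftPt (α / 2) w u i) ξ - F (shiftPt (-(α / 2)) w u i) ξ) • EuclideanSpace.single i (1 : ℝ)

/-- `f(w) := E[F(w,ξ)]`. -/
def fbar {d p : ℕ} (μξ : Measure (EuclideanSpace ℝ (Fin p)))
    (F : EuclideanSpace ℝ (Fin d) → EuclideanSpace ℝ (Fin p) → ℝ)
    (w : EuclideanSpace ℝ (Fin d)) : ℝ := ∫ ξ, F w ξ ∂μξ

/-- The randomized smoothing `f_α(w) := E[f(w+u)]`, `u` uniform on `B̄_{α/2}`. -/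
def smoothed {d : ℕ} (α : ℝ) (f : EuclideanSpace ℝ (Fin d) → ℝ)
    (w : EuclideanSpace ℝ (Fin d)) : ℝ := ∫ u, f (w + u) ∂(unifMeas d (α / 2))

/- ### Auxiliary lemmas -/

lemma Binf_closed (d : ℕ) (r : ℝ) : IsClosed (Binf d r) := by
  have : Binf d r = ⋂ i, (fun z : EuclideanSpace ℝ (Fin d) => z i) ⁻¹' {t | |t| ≤ r} := by
    ext z; simp [Binf, Set.mem_iInter]
  rw [this]
  exact isClosed_iInter fun i =>
    (isClosed_le continuous_abs continuous_const).preimage ((continuous_apply i).comp (PiLp.continuous_ofLp ..))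

lemma Binf_meas (d : ℕ) (r : ℝ) : MeasurableSet (Binf d r) := (Binf_closed d r).measurableSet

lemma openBox_isOpen (d : ℕ) (r : ℝ) :
    IsOpen {z : EuclideanSpace ℝ (Fin d) | ∀ i, |z i| < r} := by
  have : {z : EuclideanSpace ℝ (Fin d) | ∀ i, |z i| < r}
      = ⋂ i, (fun z : EuclideanSpace ℝ (Fin d) => z i) ⁻¹' {t | |t| < r} := by
    ext z; simp [Set.mem_iInter]
  rw [this]
  exact isOpen_iInter_of_finite fun i =>
    (isOpen_lt continuous_abs continuous_const).preimage ((continuous_apply i).comp (PiLp.continuous_ofLp ..))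

lemma Binf_norm_le {d : ℕ} {r : ℝ} (hr : 0 ≤ r) {u : EuclideanSpace ℝ (Fin d)}
    (hu : u ∈ Binf d r) : ‖u‖ ≤ Real.sqrt d * r := by
  rw [EuclideanSpace.norm_eq]
  have : ∑ i, u i ^ 2 ≤ (d : ℝ) * r ^ 2 := by
    calc ∑ i, u i ^ 2 ≤ ∑ _i : Fin d, r ^ 2 := by
          apply Finset.sum_le_sum
          intro i _
          have := hu i
          nlinarith [abs_nonneg (u i), sq_abs (u i)]
      _ = (d : ℝ) * r ^ 2 := by simp [mul_comm]
  calc Real.sqrt (∑ i, ‖u i‖ ^ 2) = Real.sqrt (∑ i, u i ^ 2) := by simp [Real.norm_eq_abs, sq_abs]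
    _ ≤ Real.sqrt ((d : ℝ) * r ^ 2) := Real.sqrt_le_sqrt this
    _ = Real.sqrt d * r := by
        rw [Real.sqrt_mul (Nat.cast_nonneg d), Real.sqrt_sq hr]

lemma Binf_vol_pos (d : ℕ) {r : ℝ} (hr : 0 < r) : 0 < volume (Binf d r) := by
  have hsub : {z : EuclideanSpace ℝ (Fin d) | ∀ i, |z i| < r} ⊆ Binf d r :=
    fun z hz i => (hz i).le
  refine lt_of_lt_of_le ?_ (measure_mono hsub)
  exact (openBox_isOpen d r).measure_pos volume ⟨0, fun i => by simpa using hr⟩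

lemma Binf_compact (d : ℕ) {r : ℝ} (hr : 0 ≤ r) : IsCompact (Binf d r) := by
  have : Binf d r ⊆ Metric.closedBall 0 (Real.sqrt d * r) := by
    intro u hu
    simpa [Metric.mem_closedBall, dist_eq_norm] using Binf_norm_le hr hu
  exact (isCompact_closedBall _ _).of_isClosed_subset (Binf_closed d r) this

lemma Binf_vol_ne_top (d : ℕ) {r : ℝ} (hr : 0 ≤ r) : volume (Binf d r) ≠ ⊤ :=
  (Binf_compact d hr).measure_lt_top.ne

lemma unifMeas_prob (d : ℕ) {r : ℝ} (hr : 0 < r) : IsProbabilityMeasure (unifMeas d r) := by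
  constructor
  rw [unifMeas, Measure.smul_apply, Measure.restrict_apply_univ, smul_eq_mul]
  exact ENNReal.inv_mul_cancel (Binf_vol_pos d hr).ne' (Binf_vol_ne_top d hr.le)

lemma unifMeas_ae {d : ℕ} {r : ℝ} {p : EuclideanSpace ℝ (Fin d) → Prop}
    (h : ∀ᵐ u ∂(volume : Measure (EuclideanSpace ℝ (Fin d))), p u) :
    ∀ᵐ u ∂(unifMeas d r), p u := by
  rw [unifMeas]
  exact Measure.ae_smul_measure (ae_restrict_of_ae h) _

lemma unifMeas_ae_mem (d : ℕ) (r : ℝ) : ∀ᵐ u ∂(unifMeas d r), u ∈ Binf d r := by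
  rw [unifMeas]
  exact Measure.ae_smul_measure (ae_restrict_mem (Binf_meas d r)) _

lemma integrable_unifMeas {d : ℕ} {r : ℝ} (hr : 0 < r) {h : EuclideanSpace ℝ (Fin d) → ℝ}
    (hc : Continuous h) : Integrable h (unifMeas d r) := by
  rw [unifMeas]
  refine (hc.continuousOn.integrableOn_compact (Binf_compact d hr.le)).smul_measure ?_
  exact ENNReal.inv_ne_top.mpr (Binf_vol_pos d hr).ne'

lemma gradient_measurable_shift {d : ℕ} (g : EuclideanSpace ℝ (Fin d) → ℝ)
    (w : EuclideanSpace ℝ (Fin d)) :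
    Measurable fun u : EuclideanSpace ℝ (Fin d) => gradient g (w + u) := by
  unfold gradient
  have h1 : Measurable fun x : EuclideanSpace ℝ (Fin d) => fderiv ℝ g x := measurable_fderiv ℝ g
  have h2 : Continuous fun L : EuclideanSpace ℝ (Fin d) →L[ℝ] ℝ =>
      (InnerProductSpace.toDual ℝ (EuclideanSpace ℝ (Fin d))).symm L :=
    (InnerProductSpace.toDual ℝ (EuclideanSpace ℝ (Fin d))).symm.continuous
  exact (h2.measurable.comp h1).comp (measurable_const_add w)

lemma gradient_norm_le_of_lipschitz {d : ℕ} {g : EuclideanSpace ℝ (Fin d) → ℝ} {K : NNReal}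
    (hg : LipschitzWith K g) (x : EuclideanSpace ℝ (Fin d)) : ‖gradient g x‖ ≤ K := by
  unfold gradient
  rw [LinearIsometryEquiv.norm_map]
  exact norm_fderiv_le_of_lipschitz ℝ hg

lemma hasDerivAt_line {d : ℕ} (g : EuclideanSpace ℝ (Fin d) → ℝ) (v x : EuclideanSpace ℝ (Fin d))
    (h : DifferentiableAt ℝ g x) :
    HasDerivAt (fun s : ℝ => g (x + s • v)) (inner ℝ (gradient g x) v : ℝ) 0 := by
  have hline : HasDerivAt (fun s : ℝ => x + s • v) v 0 := by
    simpa using ((hasDerivAt_id (0:ℝ)).smul_const v).const_add x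
  have hF := h.hasGradientAt.hasFDerivAt
  rw [show x = x + (0:ℝ) • v by simp] at hF
  have := hF.comp_hasDerivAt 0 hline
  exact this.congr_deriv (by simp [InnerProductSpace.toDual_apply_apply])

/-- Assume `κ > β + √d·α/2`. Then for all `w ∈ B̄_β`, any gradient `G` of the
smoothed function `f_α` at `w` satisfies
`G ∈ closure (convexHull {∇f(x) : x ∈ B̄(w, √d·α/2), f differentiable at x})`,
where `B̄(w,r)` is the closed Euclidean ball of radius `r` centered at `w`. -/
theorem smoothed_gradient_mem_clarke_eps_subdifferential
    (d p : ℕ) (α β κ : ℝ) (hα : 0 < α) (hβ : 0 < β)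
    (hκ : β + Real.sqrt d * (α / 2) < κ)
    (μξ : Measure (EuclideanSpace ℝ (Fin p))) [IsProbabilityMeasure μξ]
    (F : EuclideanSpace ℝ (Fin d) → EuclideanSpace ℝ (Fin p) → ℝ)
    (hFmeas : Measurable (Function.uncurry F))
    (hFcont : ∀ ξ, ContinuousOn (fun w => F w ξ) (Binf d κ))
    (L0 : EuclideanSpace ℝ (Fin p) → ℝ) (hL0meas : Measurable L0)
    (hL0sq : Integrable (fun ξ => (L0 ξ) ^ 2) μξ)
    (hlip : ∀ᵐ ξ ∂μξ, ∀ w ∈ Binf d κ, ∀ w' ∈ Binf d κ,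
      |F w ξ - F w' ξ| ≤ L0 ξ * ‖w - w'‖)
    (hFint : ∀ w ∈ Binf d κ, Integrable (fun ξ => F w ξ) μξ) :
    ∀ w ∈ Binf d β, ∀ G : EuclideanSpace ℝ (Fin d),
      HasGradientAt (smoothed α (fbar μξ F)) G w →
      G ∈ closure (convexHull ℝ
        {g : EuclideanSpace ℝ (Fin d) |
          ∃ x ∈ Metric.closedBall w (Real.sqrt d * (α / 2)),
            DifferentiableAt ℝ (fbar μξ F) x ∧ g = gradient (fbar μξ F) x}) := by
  set_option maxHeartbeats 1000000 in
  intro w hw G hG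
  set f : EuclideanSpace ℝ (Fin d) → ℝ := fbar μξ F with hf_def
  set ν : Measure (EuclideanSpace ℝ (Fin d)) := unifMeas d (α / 2) with hν_def
  haveI hνprob : IsProbabilityMeasure ν := unifMeas_prob d (by positivity)
  -- integrability of L0
  have hL0int : Integrable L0 μξ := by
    refine ((integrable_const (1:ℝ)).add hL0sq).mono' hL0meas.aestronglyMeasurable ?_
    filter_upwards with ξ
    simp only [Real.norm_eq_abs, Pi.add_apply]
    nlinarith [sq_abs (L0 ξ), sq_nonneg (|L0 ξ| - 1)]
  set L : ℝ := ∫ ξ, L0 ξ ∂μξ with hL_def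
  set K : NNReal := Real.toNNReal L with hK_def
  -- f is Lipschitz on Binf d κ
  have hfLip : LipschitzOnWith K f (Binf d κ) := by
    rw [lipschitzOnWith_iff_dist_le_mul]
    intro x hx y hy
    have h1 : dist (f x) (f y) ≤ L * dist x y := by
      rw [Real.dist_eq, hf_def]
      show |fbar μξ F x - fbar μξ F y| ≤ L * dist x y
      rw [fbar, fbar, ← integral_sub (hFint x hx) (hFint y hy)]
      calc |∫ ξ, (F x ξ - F y ξ) ∂μξ| ≤ ∫ ξ, |F x ξ - F y ξ| ∂μξ := by
            simpa [Real.norm_eq_abs] using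
              norm_integral_le_integral_norm (μ := μξ) (fun ξ => F x ξ - F y ξ)
        _ ≤ ∫ ξ, L0 ξ * dist x y ∂μξ := by
            refine integral_mono_ae (((hFint x hx).sub (hFint y hy)).abs)
              (hL0int.mul_const _) ?_
            filter_upwards [hlip] with ξ h
            simpa [dist_eq_norm] using h x hx y hy
        _ = L * dist x y := by rw [integral_mul_const]
    refine h1.trans (mul_le_mul_of_nonneg_right ?_ dist_nonneg)
    exact Real.le_coe_toNNReal L
  obtain ⟨g, hgLip, hfg⟩ := hfLip.extend_real
  -- Rademacher
  have hgdiff : ∀ᵐ x ∂(volume : Measure (EuclideanSpace ℝ (Fin d))), DifferentiableAt ℝ g x :=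
    hgLip.ae_differentiableAt
  have hgdiff_w : ∀ᵐ u ∂ν, DifferentiableAt ℝ g (w + u) :=
    unifMeas_ae ((measurePreserving_add_left volume w).quasiMeasurePreserving.ae hgdiff)
  have hae : ∀ᵐ u ∂ν, u ∈ Binf d (α / 2) ∧ DifferentiableAt ℝ g (w + u) :=
    (unifMeas_ae_mem d (α / 2)).and hgdiff_w
  -- basic inequality using d ≥ 1 whenever an index exists
  have hsq1 : ∀ _i : Fin d, β + α / 2 < κ := by
    intro i
    have hd : (1:ℝ) ≤ Real.sqrt d := by
      have h1 : (1:ℝ) ≤ (d:ℝ) := by exact_mod_cast i.pos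
      calc (1:ℝ) = Real.sqrt 1 := Real.sqrt_one.symm
        _ ≤ Real.sqrt d := Real.sqrt_le_sqrt h1
    nlinarith
  have hnhd : ∀ z : EuclideanSpace ℝ (Fin d), (∀ i, |z i| ≤ β + α / 2) → Binf d κ ∈ 𝓝 z := by
    intro z hz
    refine Filter.mem_of_superset ((openBox_isOpen d κ).mem_nhds ?_) fun y hy i => (hy i).le
    intro i
    exact lt_of_le_of_lt (hz i) (hsq1 i)
  -- smoothed f = smoothed g near w
  have hsmcong : ∀ z : EuclideanSpace ℝ (Fin d), (∀ i, |z i| < κ - α / 2) →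
      smoothed α f z = smoothed α g z := by
    intro z hz
    show (∫ u, f (z + u) ∂ν) = ∫ u, g (z + u) ∂ν
    refine integral_congr_ae ?_
    filter_upwards [unifMeas_ae_mem d (α / 2)] with u hu
    refine hfg ?_
    intro i
    have h1 := hu i
    have h2 := hz i
    calc |(z + u) i| = |z i + u i| := rfl
      _ ≤ |z i| + |u i| := abs_add_le _ _
      _ ≤ κ := by linarith
  have hU : {z : EuclideanSpace ℝ (Fin d) | ∀ i, |z i| < κ - α / 2} ∈ 𝓝 w := by
    refine (openBox_isOpen d (κ - α / 2)).mem_nhds ?_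
    intro i
    have h1 := hw i
    have h2 := hsq1 i
    simp only [Set.mem_setOf_eq]  -- no-op safety
    linarith
  have hsm : smoothed α f =ᶠ[𝓝 w] smoothed α g :=
    Filter.eventually_of_mem hU fun z hz => hsmcong z hz
  have hG' : HasGradientAt (smoothed α g) G w := by
    rw [hasGradientAt_iff_hasFDerivAt] at hG ⊢
    exact hG.congr_of_eventuallyEq hsm.symm
  -- the candidate gradient integrand
  set φ : EuclideanSpace ℝ (Fin d) → EuclideanSpace ℝ (Fin d) :=
    fun u => gradient g (w + u) with hφ_def
  have hφmeas : Measurable φ := gradient_measurable_shift g w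
  have hφbound : ∀ u, ‖φ u‖ ≤ (K : ℝ) := fun u => gradient_norm_le_of_lipschitz hgLip _
  have hφint : Integrable φ ν :=
    Integrable.mono' (integrable_const (K : ℝ)) hφmeas.aestronglyMeasurable
      (Filter.Eventually.of_forall hφbound)
  set V : EuclideanSpace ℝ (Fin d) := ∫ u, φ u ∂ν with hV_def
  -- G = V
  have hgint : ∀ z : EuclideanSpace ℝ (Fin d), Integrable (fun u => g (z + u)) ν := fun z =>
    integrable_unifMeas (by positivity) (hgLip.continuous.comp (continuous_const.add continuous_id))
  have hGV : G = V := by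
    refine ext_inner_right ℝ fun v => ?_
    set t : ℕ → ℝ := fun n => ((n : ℝ) + 1)⁻¹ with ht_def
    have htpos : ∀ n, 0 < t n := fun n => by positivity
    have htto : Tendsto t atTop (𝓝[≠] (0:ℝ)) := by
      refine tendsto_nhdsWithin_of_tendsto_nhds_of_eventually_within _ ?_ ?_
      · simpa [ht_def, one_div] using tendsto_one_div_add_atTop_nhds_zero_nat (𝕜 := ℝ)
      · exact Filter.Eventually.of_forall fun n => (htpos n).ne'
    set H : ℝ → ℝ := fun s => smoothed α g (w + s • v) with hH_def
    -- derivative of H at 0 is ⟪G, v⟫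
    have hline : HasDerivAt (fun s : ℝ => w + s • v) v 0 := by
      simpa using ((hasDerivAt_id (0:ℝ)).smul_const v).const_add w
    have hF := hG'.hasFDerivAt
    rw [show w = w + (0:ℝ) • v by simp] at hF
    have hDeriv : HasDerivAt H (inner ℝ G v : ℝ) 0 := by
      exact (hF.comp_hasDerivAt 0 hline).congr_deriv
        (by simp [InnerProductSpace.toDual_apply_apply] :
          (InnerProductSpace.toDual ℝ (EuclideanSpace ℝ (Fin d)) G) v = inner ℝ G v)
    have hslopeseq : Tendsto (fun n => (t n)⁻¹ * (H (t n) - H 0)) atTop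
        (𝓝 (inner ℝ G v : ℝ)) := by
      have h1 := (hasDerivAt_iff_tendsto_slope.mp hDeriv).comp htto
      refine h1.congr fun n => ?_
      simp [Function.comp, slope_def_field, div_eq_inv_mul]
    -- the finite differences and their integrals
    have hInt_eq : ∀ n, (∫ u, (t n)⁻¹ * (g (w + u + t n • v) - g (w + u)) ∂ν)
        = (t n)⁻¹ * (H (t n) - H 0) := by
      intro n
      calc (∫ u, (t n)⁻¹ * (g (w + u + t n • v) - g (w + u)) ∂ν)
          = (t n)⁻¹ * ∫ u, (g ((w + t n • v) + u) - g (w + u)) ∂ν := by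
            rw [← integral_const_mul]
            refine integral_congr_ae (Filter.Eventually.of_forall fun u => ?_)
            show (t n)⁻¹ * (g (w + u + t n • v) - g (w + u))
              = (t n)⁻¹ * (g ((w + t n • v) + u) - g (w + u))
            rw [add_right_comm]
        _ = (t n)⁻¹ * ((∫ u, g ((w + t n • v) + u) ∂ν) - ∫ u, g (w + u) ∂ν) := by
            rw [integral_sub (hgint _) (hgint w)]
        _ = (t n)⁻¹ * (H (t n) - H 0) := by
            have h1 : H (t n) = ∫ u, g ((w + t n • v) + u) ∂ν := rfl
            have h0 : H 0 = ∫ u, g (w + u) ∂ν := by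
              show (∫ u, g ((w + (0:ℝ) • v) + u) ∂(unifMeas d (α/2))) = _
              norm_num
              rfl
            rw [h1, h0]
    -- dominated convergence
    have hDCT : Tendsto (fun n => ∫ u, (t n)⁻¹ * (g (w + u + t n • v) - g (w + u)) ∂ν) atTop
        (𝓝 (∫ u, (inner ℝ (φ u) v : ℝ) ∂ν)) := by
      refine tendsto_integral_filter_of_dominated_convergence (fun _ => (K : ℝ) * ‖v‖)
        ?_ ?_ ?_ ?_
      · refine Filter.Eventually.of_forall fun n => Continuous.aestronglyMeasurable ?_
        have c1 : Continuous fun u : EuclideanSpace ℝ (Fin d) => g (w + u + t n • v) :=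
          hgLip.continuous.comp ((continuous_const.add continuous_id).add continuous_const)
        have c2 : Continuous fun u : EuclideanSpace ℝ (Fin d) => g (w + u) :=
          hgLip.continuous.comp (continuous_const.add continuous_id)
        exact continuous_const.mul (c1.sub c2)
      · refine Filter.Eventually.of_forall fun n => Filter.Eventually.of_forall fun u => ?_
        have hd : dist (g (w + u + t n • v)) (g (w + u)) ≤ (K : ℝ) * (t n * ‖v‖) := by
          have := hgLip.dist_le_mul (w + u + t n • v) (w + u)
          have hdd : dist (w + u + t n • v) (w + u) = t n * ‖v‖ := by
            rw [dist_eq_norm]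
            simp [norm_smul, abs_of_pos (htpos n)]
          rwa [hdd] at this
        rw [Real.norm_eq_abs, abs_mul, abs_inv, abs_of_pos (htpos n), ← Real.dist_eq]
        calc (t n)⁻¹ * dist (g (w + u + t n • v)) (g (w + u))
            ≤ (t n)⁻¹ * ((K : ℝ) * (t n * ‖v‖)) := by
              exact mul_le_mul_of_nonneg_left hd (by positivity)
          _ = (K : ℝ) * ‖v‖ := by rw [mul_left_comm, inv_mul_cancel_left₀ (htpos n).ne']
      · exact integrable_const _
      · filter_upwards [hgdiff_w] with u hu
        have hd := hasDerivAt_line g v (w + u) hu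
        have h1 := (hasDerivAt_iff_tendsto_slope.mp hd).comp htto
        refine h1.congr fun n => ?_
        simp [Function.comp, slope_def_field, div_eq_inv_mul]
    have hunique : (inner ℝ G v : ℝ) = ∫ u, (inner ℝ (φ u) v : ℝ) ∂ν := by
      refine tendsto_nhds_unique hslopeseq ?_
      exact (hDCT.congr fun n => hInt_eq n)
    rw [hunique]
    calc (∫ u, (inner ℝ (φ u) v : ℝ) ∂ν) = ∫ u, (inner ℝ v (φ u) : ℝ) ∂ν := by
          refine integral_congr_ae (Filter.Eventually.of_forall fun u => ?_)
          show (inner ℝ (φ u) v : ℝ) = (inner ℝ v (φ u) : ℝ)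
          exact real_inner_comm _ _
      _ = (inner ℝ v V : ℝ) := integral_inner hφint v
      _ = (inner ℝ V v : ℝ) := real_inner_comm _ _
  -- membership
  rw [hGV, hV_def]
  refine Convex.integral_mem ((convex_convexHull ℝ _).closure) isClosed_closure ?_ hφint
  filter_upwards [hae] with u hu
  refine subset_closure (subset_convexHull ℝ _ ?_)
  have hx : w + u ∈ Metric.closedBall w (Real.sqrt d * (α / 2)) := by
    rw [Metric.mem_closedBall, dist_eq_norm, add_sub_cancel_left]
    exact Binf_norm_le (by positivity) hu.1
  have hnb : Binf d κ ∈ 𝓝 (w + u) := by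
    refine hnhd _ fun i => ?_
    have h1 := hw i
    have h2 := hu.1 i
    calc |(w + u) i| = |w i + u i| := rfl
      _ ≤ |w i| + |u i| := abs_add_le _ _
      _ ≤ β + α / 2 := add_le_add h1 h2
  have heq : f =ᶠ[𝓝 (w + u)] g := Filter.eventually_of_mem hnb fun z hz => hfg hz
  exact ⟨w + u, hx, heq.differentiableAt_iff.mpr hu.2, heq.gradient_eq.symm⟩
end
end

section
/- The gradient ∇f_α of the smoothed function is 2α^{-1}·√d·L₀-Lipschitz continuous on the closed l∞-ball B̄_β, i.e. ‖∇f_α(w) − ∇f_α(w′)‖₂ ≤ 2α^{-1}√d L₀ ‖w − w′‖₂ for all w, w′ ∈ B̄_β, where L₀ := E[L₀(ξ)]. -/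
open MeasureTheory Filter
open scoped Classical BigOperators

open scoped Topology

noncomputable section

namespace SGLaux

variable {d : ℕ}

/-- The closed cube of radius `r` centered at `x`. -/
def cube (x : EuclideanSpace ℝ (Fin d)) (r : ℝ) : Set (EuclideanSpace ℝ (Fin d)) :=
  {y | ∀ i, |y i - x i| ≤ r}

lemma Binf_eq_cube (r : ℝ) : Binf d r = cube (0 : EuclideanSpace ℝ (Fin d)) r := by
  ext y; simp [Binf, cube]

lemma cube_eq_preimage (x : EuclideanSpace ℝ (Fin d)) (r : ℝ) :
    cube x r = ((MeasurableEquiv.toLp 2 (Fin d → ℝ)).symm) ⁻¹'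
      (Set.univ.pi fun i => Set.Icc (x i - r) (x i + r)) := by
  ext y
  have : ∀ i, ((MeasurableEquiv.toLp 2 (Fin d → ℝ)).symm y) i = y i := fun _ => rfl
  simp only [cube, Set.mem_setOf_eq, Set.mem_preimage, Set.mem_pi, Set.mem_univ,
    forall_true_left, Set.mem_Icc, this, abs_le]
  constructor
  · intro h i; obtain ⟨h1, h2⟩ := h i; exact ⟨by linarith, by linarith⟩
  · intro h i; obtain ⟨h1, h2⟩ := h i; exact ⟨by linarith, by linarith⟩

lemma measurableSet_cube (x : EuclideanSpace ℝ (Fin d)) (r : ℝ) :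
    MeasurableSet (cube x r) := by
  rw [cube_eq_preimage]
  exact ((MeasurableEquiv.toLp 2 (Fin d → ℝ)).symm).measurable
    (MeasurableSet.univ_pi fun i => measurableSet_Icc)

lemma volume_cube (x : EuclideanSpace ℝ (Fin d)) {r : ℝ} (hr : 0 ≤ r) :
    volume (cube x r) = ENNReal.ofReal ((2 * r) ^ d) := by
  rw [cube_eq_preimage,
    (EuclideanSpace.volume_preserving_symm_measurableEquiv_toLp (Fin d)).measure_preimage
      ((MeasurableSet.univ_pi fun i => measurableSet_Icc).nullMeasurableSet),
    volume_pi_pi]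
  have : ∀ i : Fin d, volume (Set.Icc (x i - r) (x i + r)) = ENNReal.ofReal (2 * r) := by
    intro i; rw [Real.volume_Icc]; ring_nf
  rw [Finset.prod_congr rfl fun i _ => this i, Finset.prod_const, Finset.card_univ,
    Fintype.card_fin, ← ENNReal.ofReal_pow (by linarith)]

lemma isCompact_cube (x : EuclideanSpace ℝ (Fin d)) (r : ℝ) : IsCompact (cube x r) := by
  have h := (isCompact_univ_pi (fun i : Fin d => isCompact_Icc (a := x i - r) (b := x i + r)))
  have heq : cube x r = (EuclideanSpace.equiv (Fin d) ℝ).symm.toHomeomorph ''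
      (Set.univ.pi fun i => Set.Icc (x i - r) (x i + r)) := by
    rw [cube_eq_preimage]
    ext y
    constructor
    · intro hy; exact ⟨_, hy, rfl⟩
    · rintro ⟨zz, hz, rfl⟩; exact hz
  rw [heq]
  exact h.image (Homeomorph.continuous _)

lemma setIntegral_add_left (f : EuclideanSpace ℝ (Fin d) → ℝ) (x : EuclideanSpace ℝ (Fin d))
    (s : Set (EuclideanSpace ℝ (Fin d))) :
    ∫ y in s, f y = ∫ u in (fun u => x + u) ⁻¹' s, f (x + u) := by
  have h1 : MeasurePreserving (fun u : EuclideanSpace ℝ (Fin d) => x + u) volume volume :=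
    measurePreserving_add_left volume x
  have h2 : MeasurableEmbedding (fun u : EuclideanSpace ℝ (Fin d) => x + u) :=
    (MeasurableEquiv.addLeft x).measurableEmbedding
  conv_lhs => rw [← h1.map_eq]
  rw [h2.setIntegral_map]

lemma volume_Icc_diff (a b r : ℝ) :
    volume (Set.Icc (a - r) (a + r) \ Set.Icc (b - r) (b + r)) ≤ ENNReal.ofReal |a - b| := by
  have hsub : Set.Icc (a - r) (a + r) \ Set.Icc (b - r) (b + r) ⊆
      Set.Ico (a - r) (b - r) ∪ Set.Ioc (b + r) (a + r) := by
    rintro y ⟨⟨h1, h2⟩, h3⟩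
    simp only [Set.mem_Icc, not_and_or, not_le] at h3
    rcases h3 with h3 | h3
    · exact Or.inl ⟨h1, by linarith⟩
    · exact Or.inr ⟨by linarith, h2⟩
  refine le_trans (measure_mono hsub) (le_trans (measure_union_le _ _) ?_)
  rw [Real.volume_Ico, Real.volume_Ioc]
  rcases le_total a b with h | h
  · rw [abs_of_nonpos (by linarith : a - b ≤ 0)]
    have h0 : ENNReal.ofReal (a + r - (b + r)) = 0 := by
      rw [ENNReal.ofReal_eq_zero]; linarith
    rw [h0, add_zero]
    exact ENNReal.ofReal_le_ofReal (by linarith)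
  · rw [abs_of_nonneg (by linarith : 0 ≤ a - b)]
    have h0 : ENNReal.ofReal (b - r - (a - r)) = 0 := by
      rw [ENNReal.ofReal_eq_zero]; linarith
    rw [h0, zero_add]
    exact ENNReal.ofReal_le_ofReal (by linarith)

lemma coord_le_norm (v : EuclideanSpace ℝ (Fin d)) (i : Fin d) : |v i| ≤ ‖v‖ := by
  rw [EuclideanSpace.norm_eq]
  rw [← Real.sqrt_sq (abs_nonneg (v i))]
  apply Real.sqrt_le_sqrt
  rw [sq_abs]
  calc v i ^ 2 = ‖v i‖ ^ 2 := by rw [Real.norm_eq_abs, sq_abs]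
  _ ≤ ∑ j, ‖v j‖ ^ 2 := Finset.single_le_sum (f := fun j => ‖v j‖ ^ 2) (fun j _ => sq_nonneg _) (Finset.mem_univ i)

lemma sum_abs_le_sqrt_norm (v : EuclideanSpace ℝ (Fin d)) :
    ∑ i, |v i| ≤ Real.sqrt d * ‖v‖ := by
  have h := Finset.sum_mul_sq_le_sq_mul_sq Finset.univ (fun _ : Fin d => (1:ℝ)) (fun i => |v i|)
  simp only [one_mul, one_pow, Finset.sum_const, Finset.card_univ, Fintype.card_fin,
    nsmul_eq_mul, mul_one] at h
  have hnn : (0:ℝ) ≤ ∑ i, |v i| := Finset.sum_nonneg fun i _ => abs_nonneg _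
  have h2 : (∑ i, |v i|) ^ 2 ≤ (Real.sqrt d * ‖v‖) ^ 2 := by
    rw [mul_pow, Real.sq_sqrt (Nat.cast_nonneg d), EuclideanSpace.norm_eq,
      Real.sq_sqrt (Finset.sum_nonneg fun i _ => sq_nonneg _)]
    calc (∑ i, |v i|) ^ 2 ≤ (d:ℝ) * ∑ i, |v i| ^ 2 := h
    _ = (d:ℝ) * ∑ i, ‖v i‖ ^ 2 := by simp [Real.norm_eq_abs]
  have hb : (0:ℝ) ≤ Real.sqrt d * ‖v‖ := mul_nonneg (Real.sqrt_nonneg _) (norm_nonneg _)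
  nlinarith [h2, hnn, hb]

lemma volume_cube_diff (hd : 1 ≤ d) {r : ℝ} (hr : 0 ≤ r) (a b : EuclideanSpace ℝ (Fin d)) :
    volume (cube a r \ cube b r) ≤
      ENNReal.ofReal ((2 * r) ^ (d - 1) * ∑ i, |a i - b i|) := by
  set S : Fin d → Set (Fin d → ℝ) := fun i => Set.univ.pi fun j =>
    if j = i then Set.Icc (a i - r) (a i + r) \ Set.Icc (b i - r) (b i + r)
    else Set.Icc (a j - r) (a j + r) with hS
  have hsub : cube a r \ cube b r ⊆
      ⋃ i, ((MeasurableEquiv.toLp 2 (Fin d → ℝ)).symm) ⁻¹' (S i) := by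
    rintro y ⟨hya, hyb⟩
    simp only [cube, Set.mem_setOf_eq, not_forall] at hyb
    obtain ⟨i, hi⟩ := hyb
    refine Set.mem_iUnion.2 ⟨i, ?_⟩
    intro j _
    have hcoe : ((MeasurableEquiv.toLp 2 (Fin d → ℝ)).symm y) j = y j := rfl
    by_cases hji : j = i
    · subst hji
      simp only [if_pos rfl]
      refine ⟨?_, ?_⟩
      · have := abs_le.mp (hya j); exact ⟨by linarith [this.1, hcoe], by linarith [this.2, hcoe]⟩
      · intro hmem
        exact hi (abs_le.mpr ⟨by linarith [hmem.1, hcoe], by linarith [hmem.2, hcoe]⟩)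
    · simp only [if_neg hji]
      have := abs_le.mp (hya j); exact ⟨by linarith [this.1, hcoe], by linarith [this.2, hcoe]⟩
  have hvol : ∀ i, volume (((MeasurableEquiv.toLp 2 (Fin d → ℝ)).symm) ⁻¹' (S i)) ≤
      ENNReal.ofReal |a i - b i| * ENNReal.ofReal ((2 * r) ^ (d - 1)) := by
    intro i
    have hms : MeasurableSet (S i) := by
      apply MeasurableSet.univ_pi
      intro j
      by_cases hji : j = i
      · simp only [hji, if_pos rfl]; exact measurableSet_Icc.diff measurableSet_Icc
      · simp only [if_neg hji]; exact measurableSet_Icc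
    rw [(EuclideanSpace.volume_preserving_symm_measurableEquiv_toLp (Fin d)).measure_preimage
      hms.nullMeasurableSet, hS, volume_pi_pi]
    have hsplit := (Finset.mul_prod_erase Finset.univ
      (fun j => volume (if j = i then Set.Icc (a i - r) (a i + r) \ Set.Icc (b i - r) (b i + r)
        else Set.Icc (a j - r) (a j + r))) (Finset.mem_univ i)).symm
    rw [hsplit, if_pos rfl]
    have herase : ∀ j ∈ Finset.univ.erase i,
        volume (if j = i then Set.Icc (a i - r) (a i + r) \ Set.Icc (b i - r) (b i + r)
          else Set.Icc (a j - r) (a j + r)) = ENNReal.ofReal (2 * r) := by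
      intro j hj
      rw [if_neg (Finset.ne_of_mem_erase hj), Real.volume_Icc]
      ring_nf
    rw [Finset.prod_congr rfl herase, Finset.prod_const, Finset.card_erase_of_mem
      (Finset.mem_univ i), Finset.card_univ, Fintype.card_fin]
    exact mul_le_mul' (volume_Icc_diff _ _ _)
      (le_of_eq (ENNReal.ofReal_pow (by linarith) _).symm)
  calc volume (cube a r \ cube b r)
      ≤ ∑ i, volume (((MeasurableEquiv.toLp 2 (Fin d → ℝ)).symm) ⁻¹' (S i)) :=
        le_trans (measure_mono hsub) (measure_iUnion_fintype_le _ _)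
  _ ≤ ∑ i, ENNReal.ofReal |a i - b i| * ENNReal.ofReal ((2 * r) ^ (d - 1)) :=
        Finset.sum_le_sum fun i _ => hvol i
  _ = ENNReal.ofReal ((2 * r) ^ (d - 1) * ∑ i, |a i - b i|) := by
        rw [← Finset.sum_mul, ← ENNReal.ofReal_sum_of_nonneg (fun i _ => abs_nonneg _),
          ← ENNReal.ofReal_mul (Finset.sum_nonneg fun i _ => abs_nonneg _), mul_comm]

lemma preimage_add_cube (x : EuclideanSpace ℝ (Fin d)) (r : ℝ) :
    (fun u : EuclideanSpace ℝ (Fin d) => x + u) ⁻¹' (cube x r) = Binf d r := by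
  ext u
  simp only [cube, Binf, Set.mem_preimage, Set.mem_setOf_eq, PiLp.add_apply]
  constructor <;> intro h i <;> have := h i <;> simpa using this

lemma smoothed_eq {α : ℝ} (hα : 0 < α) (f : EuclideanSpace ℝ (Fin d) → ℝ)
    (x : EuclideanSpace ℝ (Fin d)) :
    smoothed α f x = (α ^ d)⁻¹ * ∫ y in cube x (α / 2), f y := by
  have hvol : volume (Binf d (α / 2)) = ENNReal.ofReal (α ^ d) := by
    rw [Binf_eq_cube, volume_cube _ (by linarith : (0:ℝ) ≤ α / 2)]
    ring_nf
  rw [smoothed, unifMeas, integral_smul_measure, hvol, ← ENNReal.ofReal_inv_of_pos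
    (pow_pos hα d), ENNReal.toReal_ofReal (by positivity), smul_eq_mul]
  congr 1
  rw [setIntegral_add_left f x (cube x (α / 2)), preimage_add_cube]

lemma setIntegral_split {A B : Set (EuclideanSpace ℝ (Fin d))} (hA : MeasurableSet A)
    (hB : MeasurableSet B) {h : EuclideanSpace ℝ (Fin d) → ℝ}
    (hiA : IntegrableOn h A) (hiB : IntegrableOn h B) :
    (∫ y in A, h y) - ∫ y in B, h y = (∫ y in A \ B, h y) - ∫ y in B \ A, h y := by
  have hd1 : Disjoint (A \ B) (A ∩ B) := Set.disjoint_sdiff_left.mono_right Set.inter_subset_right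
  have hd2 : Disjoint (B \ A) (B ∩ A) := Set.disjoint_sdiff_left.mono_right Set.inter_subset_right
  have e1 : (∫ y in A, h y) = (∫ y in A \ B, h y) + ∫ y in A ∩ B, h y := by
    rw [← setIntegral_union hd1 (hA.inter hB)
      (hiA.mono_set Set.diff_subset) (hiA.mono_set Set.inter_subset_left),
      Set.diff_union_inter]
  have e2 : (∫ y in B, h y) = (∫ y in B \ A, h y) + ∫ y in A ∩ B, h y := by
    rw [Set.inter_comm A B, ← setIntegral_union hd2 (hB.inter hA)
      (hiB.mono_set Set.diff_subset) (hiB.mono_set Set.inter_subset_left),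
      Set.diff_union_inter]
  rw [e1, e2]; ring

lemma key_diff (hd : 1 ≤ d) {r κ L : ℝ} (hr : 0 ≤ r) (hL : 0 ≤ L)
    (f : EuclideanSpace ℝ (Fin d) → ℝ) (hfc : ContinuousOn f (Binf d κ))
    (hfl : ∀ x ∈ Binf d κ, ∀ y ∈ Binf d κ, |f x - f y| ≤ L * ‖x - y‖)
    (z a b : EuclideanSpace ℝ (Fin d))
    (hsa : cube a r ⊆ Binf d κ) (hsaz : ∀ y ∈ cube a r, y + z ∈ Binf d κ)
    (hsb : cube b r ⊆ Binf d κ) (hsbz : ∀ y ∈ cube b r, y + z ∈ Binf d κ) :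
    |(∫ y in cube a r, (f y - f (y + z))) - ∫ y in cube b r, (f y - f (y + z))| ≤
      2 * (L * ‖z‖) * ((2 * r) ^ (d - 1) * ∑ i, |a i - b i|) := by
  set h : EuclideanSpace ℝ (Fin d) → ℝ := fun y => f y - f (y + z) with hh
  have haddz : ∀ (s : Set (EuclideanSpace ℝ (Fin d))), (∀ y ∈ s, y + z ∈ Binf d κ) →
      ContinuousOn (fun y => f (y + z)) s := fun s hs =>
    hfc.comp ((continuous_id.add continuous_const).continuousOn) hs
  have hiA : IntegrableOn h (cube a r) :=
    ((hfc.mono hsa).sub (haddz _ hsaz)).integrableOn_compact (isCompact_cube a r)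
  have hiB : IntegrableOn h (cube b r) :=
    ((hfc.mono hsb).sub (haddz _ hsbz)).integrableOn_compact (isCompact_cube b r)
  have hbound : ∀ (s : Set (EuclideanSpace ℝ (Fin d))), s ⊆ Binf d κ →
      (∀ y ∈ s, y + z ∈ Binf d κ) → ∀ y ∈ s, ‖h y‖ ≤ L * ‖z‖ := by
    intro s hs hsz y hy
    have hl := hfl y (hs hy) (y + z) (hsz y hy)
    have hnorm : ‖y - (y + z)‖ = ‖z‖ := by
      rw [show y - (y + z) = -z by abel, norm_neg]
    rw [Real.norm_eq_abs]
    calc |h y| ≤ L * ‖y - (y + z)‖ := hl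
    _ = L * ‖z‖ := by rw [hnorm]
  have hdiffbound : ∀ (u v : EuclideanSpace ℝ (Fin d)),
      cube u r ⊆ Binf d κ → (∀ y ∈ cube u r, y + z ∈ Binf d κ) →
      ‖∫ y in cube u r \ cube v r, h y‖ ≤
        (L * ‖z‖) * ((2 * r) ^ (d - 1) * ∑ i, |u i - v i|) := by
    intro u v hs hsz
    have h1 : ‖∫ y in cube u r \ cube v r, h y‖ ≤
        (L * ‖z‖) * (volume (cube u r \ cube v r)).toReal := by
      apply norm_setIntegral_le_of_norm_le_const
        (lt_of_le_of_lt (measure_mono Set.diff_subset)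
          (by rw [volume_cube u hr]; exact ENNReal.ofReal_lt_top))
      intro y hy
      exact hbound _ hs hsz y hy.1
    refine h1.trans (mul_le_mul_of_nonneg_left ?_ (by positivity))
    apply ENNReal.toReal_le_of_le_ofReal (by positivity)
    exact volume_cube_diff hd hr u v
  rw [setIntegral_split (measurableSet_cube a r) (measurableSet_cube b r) hiA hiB]
  calc |(∫ y in cube a r \ cube b r, h y) - ∫ y in cube b r \ cube a r, h y| ≤
      ‖∫ y in cube a r \ cube b r, h y‖ + ‖∫ y in cube b r \ cube a r, h y‖ := by
        rw [Real.norm_eq_abs, Real.norm_eq_abs]; exact abs_sub _ _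
  _ ≤ (L * ‖z‖) * ((2 * r) ^ (d - 1) * ∑ i, |a i - b i|) +
      (L * ‖z‖) * ((2 * r) ^ (d - 1) * ∑ i, |b i - a i|) :=
        add_le_add (hdiffbound a b hsa hsaz) (hdiffbound b a hsb hsbz)
  _ = 2 * (L * ‖z‖) * ((2 * r) ^ (d - 1) * ∑ i, |a i - b i|) := by
        have hcomm : ∑ i, |b i - a i| = ∑ i, |a i - b i| :=
          Finset.sum_congr rfl fun i _ => abs_sub_comm _ _
        rw [hcomm]; ring

end SGLaux

set_option maxHeartbeats 1000000 in
/-- The gradient of the smoothed function `f_α` is `2α⁻¹√d·L₀`-Lipschitz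
continuous on `B̄_β`: for `w, w′ ∈ B̄_β` and gradients `G, G′` of `f_α` at `w, w′` respectively,
`‖G − G′‖₂ ≤ 2α⁻¹√d L₀ ‖w − w′‖₂`, where `L₀ := E[L₀(ξ)]`. -/
theorem smoothed_gradient_lipschitz
    (d p : ℕ) (α β κ : ℝ) (hα : 0 < α) (hβ : 0 < β) (hκ : β + α / 2 < κ)
    (μξ : Measure (EuclideanSpace ℝ (Fin p))) [IsProbabilityMeasure μξ]
    (F : EuclideanSpace ℝ (Fin d) → EuclideanSpace ℝ (Fin p) → ℝ)
    (hFmeas : Measurable (Function.uncurry F))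
    (hFcont : ∀ ξ, ContinuousOn (fun w => F w ξ) (Binf d κ))
    (L0 : EuclideanSpace ℝ (Fin p) → ℝ) (hL0meas : Measurable L0)
    (hL0sq : Integrable (fun ξ => (L0 ξ) ^ 2) μξ)
    (hlip : ∀ᵐ ξ ∂μξ, ∀ w ∈ Binf d κ, ∀ w' ∈ Binf d κ,
      |F w ξ - F w' ξ| ≤ L0 ξ * ‖w - w'‖)
    (hFint : ∀ w ∈ Binf d κ, Integrable (fun ξ => F w ξ) μξ)
    :
    ∀ w ∈ Binf d β, ∀ w' ∈ Binf d β, ∀ G G' : EuclideanSpace ℝ (Fin d),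
      HasGradientAt (smoothed α (fbar μξ F)) G w →
      HasGradientAt (smoothed α (fbar μξ F)) G' w' →
      ‖G - G'‖ ≤ 2 * α⁻¹ * Real.sqrt d * (∫ ξ, L0 ξ ∂μξ) * ‖w - w'‖ := by
  intro w hw w' hw' G G' hG hG'
  -- trivial case `d = 0`
  rcases Nat.eq_zero_or_pos d with hd0 | hd
  · subst hd0
    have hGG : G = G' := Subsingleton.elim G G'
    simp [hGG]
  -- now `1 ≤ d`
  set f : EuclideanSpace ℝ (Fin d) → ℝ := fbar μξ F with hfdef
  set L : ℝ := ∫ ξ, L0 ξ ∂μξ with hLdef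
  have hκpos : 0 < κ := by linarith
  -- `L0` is integrable
  have hL0int : Integrable L0 μξ := by
    refine Integrable.mono' ((integrable_const (1:ℝ)).add hL0sq)
      hL0meas.aestronglyMeasurable (ae_of_all _ fun ξ => ?_)
    rw [Real.norm_eq_abs]
    simp only [Pi.add_apply]
    nlinarith [abs_nonneg (L0 ξ), sq_abs (L0 ξ), sq_nonneg (|L0 ξ| - 1)]
  -- `L0` is a.e. nonnegative
  have i0 : Fin d := ⟨0, hd⟩
  set e0 : EuclideanSpace ℝ (Fin d) := EuclideanSpace.single i0 (κ/2) with he0def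
  have he0 : e0 ∈ Binf d κ := by
    intro i
    rw [he0def, EuclideanSpace.single_apply]
    by_cases hii : i = i0
    · rw [if_pos hii, abs_of_nonneg (by linarith)]; linarith
    · rw [if_neg hii, abs_zero]; linarith
  have h0mem : (0 : EuclideanSpace ℝ (Fin d)) ∈ Binf d κ := by
    intro i
    simp [hκpos.le]
  have he0norm : 0 < ‖e0 - 0‖ := by
    rw [sub_zero]
    rw [norm_pos_iff]
    intro h0
    have : e0 i0 = 0 := by rw [h0]; rfl
    rw [he0def, EuclideanSpace.single_apply, if_pos rfl] at this
    linarith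
  have hL0nn : ∀ᵐ ξ ∂μξ, 0 ≤ L0 ξ := by
    filter_upwards [hlip] with ξ hξ
    have h1 := hξ e0 he0 0 h0mem
    nlinarith [abs_nonneg (F e0 ξ - F 0 ξ)]
  have hLnn : 0 ≤ L := integral_nonneg_of_ae hL0nn
  -- `f` is `L`-Lipschitz on `Binf d κ`
  have hflip : ∀ x ∈ Binf d κ, ∀ y ∈ Binf d κ, |f x - f y| ≤ L * ‖x - y‖ := by
    intro x hx y hy
    have hsub : f x - f y = ∫ ξ, (F x ξ - F y ξ) ∂μξ :=
      (integral_sub (hFint x hx) (hFint y hy)).symm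
    rw [hsub]
    have habs : |∫ ξ, (F x ξ - F y ξ) ∂μξ| ≤ ∫ ξ, |F x ξ - F y ξ| ∂μξ := by
      simpa [Real.norm_eq_abs] using
        norm_integral_le_integral_norm (μ := μξ) (fun ξ => F x ξ - F y ξ)
    refine habs.trans ?_
    have hmono : ∫ ξ, |F x ξ - F y ξ| ∂μξ ≤ ∫ ξ, L0 ξ * ‖x - y‖ ∂μξ := by
      refine integral_mono_ae ((hFint x hx).sub (hFint y hy)).abs
        (hL0int.mul_const _) ?_
      filter_upwards [hlip] with ξ hξ
      exact hξ x hx y hy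
    refine hmono.trans ?_
    rw [integral_mul_const]
  -- `f` is continuous on `Binf d κ`
  have hfc : ContinuousOn f (Binf d κ) := by
    have hlw : LipschitzOnWith (Real.toNNReal L) f (Binf d κ) := by
      apply LipschitzOnWith.of_dist_le_mul
      intro x hx y hy
      rw [Real.dist_eq, dist_eq_norm]
      refine (hflip x hx y hy).trans ?_
      exact mul_le_mul_of_nonneg_right (Real.le_coe_toNNReal L) (norm_nonneg _)
    exact hlw.continuousOn
  -- setup
  set v : EuclideanSpace ℝ (Fin d) := G - G' with hvdef
  rcases eq_or_ne v 0 with hv0 | hvne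
  · rw [hv0, norm_zero]
    exact mul_nonneg (mul_nonneg (mul_nonneg (mul_nonneg (by norm_num)
      (inv_nonneg.mpr hα.le)) (Real.sqrt_nonneg _)) hLnn) (norm_nonneg _)
  have hvpos : 0 < ‖v‖ := norm_pos_iff.mpr hvne
  set z : EuclideanSpace ℝ (Fin d) := w' - w with hzdef
  set δ : ℝ := (κ - β - α/2)/2 with hδdef
  have hδ : 0 < δ := by rw [hδdef]; linarith
  set ε : ℝ := δ / (‖v‖ + 1) with hεdef
  have hε : 0 < ε := by rw [hεdef]; positivity
  set ρ : ℝ := β + δ with hρdef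
  have hρκ : ρ + α/2 ≤ κ := by rw [hρdef, hδdef]; linarith
  -- membership facts
  have hmemρ : ∀ (x : EuclideanSpace ℝ (Fin d)), x ∈ Binf d β → ∀ t : ℝ, |t| ≤ ε →
      x + t • v ∈ Binf d ρ := by
    intro x hx t ht i
    have h1 : |(t • v) i| = |t| * |v i| := by
      rw [PiLp.smul_apply, smul_eq_mul, abs_mul]
    have h2 : |t| * |v i| ≤ ε * ‖v‖ :=
      mul_le_mul ht (SGLaux.coord_le_norm v i) (abs_nonneg _) hε.le
    have h3 : ε * ‖v‖ ≤ δ := by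
      rw [hεdef, div_mul_eq_mul_div, div_le_iff₀ (by positivity)]
      nlinarith [hvpos]
    calc |(x + t • v) i| ≤ |x i| + |(t • v) i| := by
          rw [PiLp.add_apply]; exact abs_add_le _ _
    _ ≤ β + δ := by have := hx i; rw [h1]; linarith
  have hwρ : w ∈ Binf d ρ := fun i => (hw i).trans (by rw [hρdef]; linarith)
  have hw'ρ : w' ∈ Binf d ρ := fun i => (hw' i).trans (by rw [hρdef]; linarith)
  have hcube_sub : ∀ (a : EuclideanSpace ℝ (Fin d)), a ∈ Binf d ρ →
      SGLaux.cube a (α/2) ⊆ Binf d κ := by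
    intro a ha y hy i
    calc |y i| = |(y i - a i) + a i| := by ring_nf
    _ ≤ |y i - a i| + |a i| := abs_add_le _ _
    _ ≤ α/2 + ρ := add_le_add (hy i) (ha i)
    _ ≤ κ := by linarith
  have hcube_map : ∀ (a y : EuclideanSpace ℝ (Fin d)), y ∈ SGLaux.cube a (α/2) →
      y + z ∈ SGLaux.cube (a + z) (α/2) := by
    intro a y hy i
    have := hy i
    rw [PiLp.add_apply, PiLp.add_apply]
    convert this using 2
    ring
  -- the line derivative
  have hline : ∀ (x : EuclideanSpace ℝ (Fin d)) (t : ℝ),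
      HasDerivAt (fun s : ℝ => x + s • v) v t := by
    intro x t
    simpa using ((hasDerivAt_id t).smul_const v).const_add x
  set fα : EuclideanSpace ℝ (Fin d) → ℝ := smoothed α f with hfαdef
  have hDG : HasDerivAt (fun t : ℝ => fα (w + t • v)) (inner ℝ G v : ℝ) 0 := by
    have h0 : w + (0:ℝ) • v = w := by simp
    have hF : HasFDerivAt fα ((InnerProductSpace.toDual ℝ _) G) (w + (0:ℝ) • v) := by
      rw [h0]; exact hG.hasFDerivAt
    exact hF.comp_hasDerivAt 0 (hline w 0)
  have hDG' : HasDerivAt (fun t : ℝ => fα (w' + t • v)) (inner ℝ G' v : ℝ) 0 := by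
    have h0 : w' + (0:ℝ) • v = w' := by simp
    have hF : HasFDerivAt fα ((InnerProductSpace.toDual ℝ _) G') (w' + (0:ℝ) • v) := by
      rw [h0]; exact hG'.hasFDerivAt
    exact hF.comp_hasDerivAt 0 (hline w' 0)
  set φ : ℝ → ℝ := fun t => fα (w + t • v) - fα (w' + t • v) with hφdef
  have hDφ : HasDerivAt φ ((inner ℝ G v : ℝ) - inner ℝ G' v) 0 := hDG.sub hDG'
  -- the smoothed difference formula
  have hint_cube : ∀ (x : EuclideanSpace ℝ (Fin d)), x ∈ Binf d ρ →
      IntegrableOn f (SGLaux.cube x (α/2)) :=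
    fun x hx => (hfc.mono (hcube_sub x hx)).integrableOn_compact (SGLaux.isCompact_cube _ _)
  have hint_cube_z : ∀ (x : EuclideanSpace ℝ (Fin d)), x + z ∈ Binf d ρ →
      IntegrableOn (fun y => f (y + z)) (SGLaux.cube x (α/2)) := by
    intro x hxz
    refine (ContinuousOn.integrableOn_compact (SGLaux.isCompact_cube _ _) ?_)
    refine hfc.comp ((continuous_id.add continuous_const).continuousOn) ?_
    intro y hy
    exact hcube_sub (x + z) hxz (hcube_map x y hy)
  have e : ∀ (x : EuclideanSpace ℝ (Fin d)), x ∈ Binf d ρ → x + z ∈ Binf d ρ →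
      fα x - fα (x + z) = (α ^ d)⁻¹ * ∫ y in SGLaux.cube x (α/2), (f y - f (y + z)) := by
    intro x hx hxz
    rw [hfαdef, SGLaux.smoothed_eq hα f x, SGLaux.smoothed_eq hα f (x + z), ← mul_sub]
    congr 1
    have h1 : ∫ y in SGLaux.cube (x + z) (α/2), f y
        = ∫ y in SGLaux.cube x (α/2), f (y + z) := by
      rw [SGLaux.setIntegral_add_left f z (SGLaux.cube (x + z) (α/2))]
      have hpre : (fun u : EuclideanSpace ℝ (Fin d) => z + u) ⁻¹' SGLaux.cube (x + z) (α/2)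
          = SGLaux.cube x (α/2) := by
        ext u
        simp only [SGLaux.cube, Set.mem_preimage, Set.mem_setOf_eq, PiLp.add_apply]
        constructor <;> intro h i <;>
          · have := h i
            convert this using 2
            ring
      rw [hpre]
      refine setIntegral_congr_fun (SGLaux.measurableSet_cube _ _) ?_
      intro y _
      show f (z + y) = f (y + z)
      rw [add_comm]
    rw [h1, integral_sub (hint_cube x hx) (hint_cube_z x hxz)]
  -- the key estimate
  set K : ℝ := 2 * α⁻¹ * (L * ‖z‖) * ∑ i, |v i| with hKdef
  have hKB : ∀ t : ℝ, |t| ≤ ε → |φ t - φ 0| ≤ K * |t| := by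
    intro t ht
    have ht0 : |(0:ℝ)| ≤ ε := by simpa using hε.le
    have ha : w + t • v ∈ Binf d ρ := hmemρ w hw t ht
    have hb : w + (0:ℝ) • v ∈ Binf d ρ := hmemρ w hw 0 ht0
    have haz : (w + t • v) + z ∈ Binf d ρ := by
      have h1 : (w + t • v) + z = w' + t • v := by rw [hzdef]; abel
      rw [h1]; exact hmemρ w' hw' t ht
    have hbz : (w + (0:ℝ) • v) + z ∈ Binf d ρ := by
      have h1 : (w + (0:ℝ) • v) + z = w' + (0:ℝ) • v := by rw [hzdef]; abel
      rw [h1]; exact hmemρ w' hw' 0 ht0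
    have hφt : φ t - φ 0 = (fα (w + t • v) - fα ((w + t • v) + z))
        - (fα (w + (0:ℝ) • v) - fα ((w + (0:ℝ) • v) + z)) := by
      rw [hφdef]
      have h1 : (w + t • v) + z = w' + t • v := by rw [hzdef]; abel
      have h2 : (w + (0:ℝ) • v) + z = w' + (0:ℝ) • v := by rw [hzdef]; abel
      rw [h1, h2]
    rw [hφt, e _ ha haz, e _ hb hbz, ← mul_sub, abs_mul,
      abs_of_nonneg (inv_nonneg.mpr (pow_nonneg hα.le d))]
    have hkd := SGLaux.key_diff hd (by linarith : (0:ℝ) ≤ α/2) hLnn f hfc hflip z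
      (w + t • v) (w + (0:ℝ) • v)
      (hcube_sub _ ha) (fun y hy => hcube_sub _ haz (hcube_map _ y hy))
      (hcube_sub _ hb) (fun y hy => hcube_sub _ hbz (hcube_map _ y hy))
    have hsum : ∑ i, |(w + t • v) i - (w + (0:ℝ) • v) i| = |t| * ∑ i, |v i| := by
      rw [Finset.mul_sum]
      refine Finset.sum_congr rfl fun i _ => ?_
      rw [PiLp.add_apply, PiLp.add_apply, PiLp.smul_apply, PiLp.smul_apply,
        smul_eq_mul, smul_eq_mul]
      rw [show w i + t * v i - (w i + 0 * v i) = t * v i by ring, abs_mul]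
    rw [hsum] at hkd
    refine (mul_le_mul_of_nonneg_left hkd
      (inv_nonneg.mpr (pow_nonneg hα.le d))).trans (le_of_eq ?_)
    have h2r : 2 * (α/2) = α := by ring
    rw [h2r, hKdef]
    have hpow : α ^ d = α ^ (d - 1) * α := by
      rw [← pow_succ]
      congr 1
      omega
    rw [hpow, mul_inv]
    have hc : (α:ℝ) ^ (d - 1) ≠ 0 := pow_ne_zero _ hα.ne'
    have hcc : (α ^ (d - 1))⁻¹ * (α ^ (d - 1)) = (1:ℝ) := inv_mul_cancel₀ hc
    linear_combination (α⁻¹ * (2 * (L * ‖z‖) * (|t| * ∑ i, |v i|))) * hcc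
  have hKnn : 0 ≤ K := by
    rw [hKdef]
    exact mul_nonneg (mul_nonneg (by positivity) (mul_nonneg hLnn (norm_nonneg _)))
      (Finset.sum_nonneg fun i _ => abs_nonneg _)
  -- pass to the limit
  have hDle : ‖v‖ ^ 2 ≤ K := by
    have hslope := hasDerivAt_iff_tendsto_slope.mp hDφ
    have hball : ∀ᶠ t in 𝓝 (0:ℝ), |t| ≤ ε := by
      have hmem := Metric.ball_mem_nhds (0:ℝ) hε
      filter_upwards [hmem] with t ht
      rw [Metric.mem_ball, Real.dist_eq, sub_zero] at ht
      exact ht.le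
    have hev : ∀ᶠ t in 𝓝[≠] (0:ℝ), ‖slope φ 0 t‖ ≤ K := by
      filter_upwards [nhdsWithin_le_nhds hball, self_mem_nhdsWithin] with t ht htne
      have htne' : t ≠ 0 := htne
      rw [slope_def_field, sub_zero, Real.norm_eq_abs, abs_div]
      rw [div_le_iff₀ (abs_pos.mpr htne')]
      exact hKB t ht
    have hlim : Tendsto (fun t => ‖slope φ 0 t‖) (𝓝[≠] (0:ℝ))
        (𝓝 ‖(inner ℝ G v : ℝ) - inner ℝ G' v‖) := hslope.norm
    have hle := le_of_tendsto hlim hev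
    have hinner : (inner ℝ G v : ℝ) - inner ℝ G' v = ‖v‖ ^ 2 := by
      rw [← inner_sub_left, ← hvdef, real_inner_self_eq_norm_sq]
    calc ‖v‖ ^ 2 = ‖(inner ℝ G v : ℝ) - inner ℝ G' v‖ := by
          rw [hinner, Real.norm_eq_abs, abs_of_nonneg (sq_nonneg _)]
    _ ≤ K := hle
  -- conclude
  have hsumv : ∑ i, |v i| ≤ Real.sqrt d * ‖v‖ := SGLaux.sum_abs_le_sqrt_norm v
  have hK2 : K ≤ 2 * α⁻¹ * (L * ‖z‖) * (Real.sqrt d * ‖v‖) := by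
    rw [hKdef]
    refine mul_le_mul_of_nonneg_left hsumv ?_
    exact mul_nonneg (by positivity) (mul_nonneg hLnn (norm_nonneg _))
  have hzw : ‖z‖ = ‖w - w'‖ := by rw [hzdef, norm_sub_rev]
  have hfin : ‖v‖ ≤ 2 * α⁻¹ * Real.sqrt d * L * ‖w - w'‖ := by
    have h1 : ‖v‖ ^ 2 ≤ 2 * α⁻¹ * (L * ‖w - w'‖) * (Real.sqrt d * ‖v‖) := by
      rw [← hzw]
      exact hDle.trans hK2
    nlinarith [hvpos, h1]
  exact hfin
end
end

section
/- For any w ∈ ℝ^d, let Z* be the set of optimal solutions of the 0-1 knapsack problem: maximize Σ_{i=1}^n z_i(‖w^i‖₂² − ‖max(|w^i| − β, 0)‖₂²) over z ∈ {0,1}^n subject to Σ_{i=1}^n z_i p_i ≤ m, where ‖max(|w^i| − β, 0)‖₂² := Σ_{j=1}^{d_i} (max(|w^i_j| − β, 0))². Then the set of Euclidean projections of w onto C ∩ B̄_β equals { x ∈ ℝ^d : there exists z* ∈ Z* such that for all i ∈ {1,…,n}, x^i_j = sgn(w^i_j)·min(|w^i_j|, β) for all j if z*_i = 1, and x^i =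 0 if z*_i = 0 }. -/
open MeasureTheory Filter
open scoped Classical BigOperators

noncomputable section

/-- The weighted group `l0`-norm constraint set
`C := {w : Σ_i p_i · 1_{w^i ≠ 0}(w) ≤ m}`, where the partition of coordinates into `n` blocks
is encoded by `blk : Fin d → Fin n` (coordinate `j` belongs to block `blk j`). -/
def groupC (d n : ℕ) (blk : Fin d → Fin n) (p : Fin n → ℝ) (m : ℝ) :
    Set (EuclideanSpace ℝ (Fin d)) :=
  {w | (∑ i : Fin n, if ∃ j, blk j = i ∧ w j ≠ 0 then p i else 0) ≤ m}

/-- The objective value of the 0-1 knapsack problem associated with projecting `w`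
onto `C ∩ B̄_β`: `Σ_i z_i (‖w^i‖₂² − ‖max(|w^i| − β, 0)‖₂²)`. -/
def knapObjBeta {d n : ℕ} (blk : Fin d → Fin n) (β : ℝ)
    (w : EuclideanSpace ℝ (Fin d)) (z : Fin n → Bool) : ℝ :=
  ∑ i : Fin n, if z i then
    ((∑ j ∈ Finset.univ.filter (fun j => blk j = i), (w j) ^ 2) -
      ∑ j ∈ Finset.univ.filter (fun j => blk j = i), (max (|w j| - β) 0) ^ 2)
  else 0

lemma sign_mul_abs' (a : ℝ) : Real.sign a * |a| = a := by
  rcases lt_trichotomy a 0 with ha | ha | ha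
  · rw [Real.sign_of_neg ha, abs_of_neg ha]; ring
  · simp [ha]
  · rw [Real.sign_of_pos ha, abs_of_pos ha]; ring

lemma key_le (a b β : ℝ) (hb : |b| ≤ β) : (max (|a| - β) 0)^2 ≤ (a - b)^2 := by
  have h0 : (0:ℝ) ≤ max (|a| - β) 0 := le_max_right _ _
  have h1 : max (|a| - β) 0 ≤ |a - b| := by
    refine max_le ?_ (abs_nonneg _)
    have := abs_sub_abs_le_abs_sub a b
    linarith
  calc (max (|a| - β) 0)^2 ≤ |a - b|^2 := by exact pow_le_pow_left₀ h0 h1 2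
  _ = (a - b)^2 := sq_abs _

lemma diff_sq (a β : ℝ) (hβ : 0 < β) :
    (a - Real.sign a * min |a| β)^2 = (max (|a| - β) 0)^2 := by
  rcases le_or_gt |a| β with h | h
  · rw [min_eq_left h, sign_mul_abs', max_eq_right (by linarith)]
    simp
  · rw [min_eq_right h.le, max_eq_left (by linarith)]
    rcases lt_trichotomy a 0 with ha | ha | ha
    · rw [Real.sign_of_neg ha, abs_of_neg ha]; ring
    · exfalso; rw [ha] at h; simp at h; linarith
    · rw [Real.sign_of_pos ha, abs_of_pos ha]; ring

lemma key_eq (a b β : ℝ) (hβ : 0 < β) (hb : |b| ≤ β)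
    (h : (a - b)^2 = (max (|a| - β) 0)^2) : b = Real.sign a * min |a| β := by
  have hb1 : -β ≤ b := neg_le_of_abs_le hb
  have hb2 : b ≤ β := le_of_abs_le hb
  rcases le_or_gt |a| β with hle | hlt
  · rw [max_eq_right (by linarith)] at h
    have hab : a - b = 0 := by nlinarith [sq_nonneg (a - b)]
    rw [min_eq_left hle, sign_mul_abs']
    linarith
  · rw [max_eq_left (by linarith)] at h
    have hcases : a - b = |a| - β ∨ a - b = -(|a| - β) := sq_eq_sq_iff_eq_or_eq_neg.mp h
    rw [min_eq_right hlt.le]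
    rcases lt_trichotomy a 0 with ha | ha | ha
    · rw [Real.sign_of_neg ha]
      rw [abs_of_neg ha] at hcases hlt
      rcases hcases with hc | hc
      · exfalso; linarith
      · linarith
    · exfalso; rw [ha] at hlt; simp at hlt; linarith
    · rw [Real.sign_of_pos ha]
      rw [abs_of_pos ha] at hcases hlt
      rcases hcases with hc | hc
      · linarith
      · exfalso; linarith

lemma normsq {d : ℕ} (u : EuclideanSpace ℝ (Fin d)) : ‖u‖^2 = ∑ j, (u j)^2 := by
  rw [EuclideanSpace.norm_eq, Real.sq_sqrt (by positivity)]
  simp [sq_abs]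

lemma decomp {d n : ℕ} (blk : Fin d → Fin n) (β : ℝ) (w : EuclideanSpace ℝ (Fin d))
    (z : Fin n → Bool) :
    ∑ j : Fin d, (if z (blk j) then (max (|w j| - β) 0)^2 else (w j)^2)
      = (∑ j : Fin d, (w j)^2) - knapObjBeta blk β w z := by
  classical
  have h1 := Finset.sum_fiberwise (Finset.univ : Finset (Fin d)) blk
      (fun j => if z (blk j) then (max (|w j| - β) 0)^2 else (w j)^2)
  have h2 := Finset.sum_fiberwise (Finset.univ : Finset (Fin d)) blk (fun j => (w j)^2)
  rw [← h1, ← h2, knapObjBeta, ← Finset.sum_sub_distrib]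
  apply Finset.sum_congr rfl
  intro i _
  by_cases hz : z i
  · rw [if_pos hz]
    rw [Finset.sum_congr rfl (fun j hj => by
      rw [(Finset.mem_filter.mp hj).2, if_pos hz] :
      ∀ j ∈ Finset.univ.filter (fun j => blk j = i),
        (if z (blk j) then (max (|w j| - β) 0)^2 else (w j)^2) = (max (|w j| - β) 0)^2)]
    ring
  · rw [if_neg hz]
    rw [Finset.sum_congr rfl (fun j hj => by
      rw [(Finset.mem_filter.mp hj).2, if_neg hz] :
      ∀ j ∈ Finset.univ.filter (fun j => blk j = i),
        (if z (blk j) then (max (|w j| - β) 0)^2 else (w j)^2) = (w j)^2)]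
    ring

/-- The point built from a knapsack solution `z`. -/
def buildY {d n : ℕ} (blk : Fin d → Fin n) (β : ℝ) (w : EuclideanSpace ℝ (Fin d))
    (z : Fin n → Bool) : EuclideanSpace ℝ (Fin d) :=
  WithLp.toLp 2 (fun j => if z (blk j) then Real.sign (w j) * min |w j| β else 0)

lemma buildY_apply {d n : ℕ} (blk : Fin d → Fin n) (β : ℝ) (w : EuclideanSpace ℝ (Fin d))
    (z : Fin n → Bool) (j : Fin d) :
    buildY blk β w z j = if z (blk j) then Real.sign (w j) * min |w j| β else 0 := rfl

lemma buildY_binf {d n : ℕ} (blk : Fin d → Fin n) {β : ℝ} (hβ : 0 < β)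
    (w : EuclideanSpace ℝ (Fin d)) (z : Fin n → Bool) (j : Fin d) :
    |buildY blk β w z j| ≤ β := by
  rw [buildY_apply]
  split
  · rw [abs_mul]
    have h1 : |Real.sign (w j)| ≤ 1 := by
      rcases Real.sign_apply_eq (w j) with h | h | h <;> rw [h] <;> norm_num
    have h2 : |min |w j| β| ≤ β := by
      rw [abs_of_nonneg (le_min (abs_nonneg _) hβ.le)]
      exact min_le_right _ _
    calc |Real.sign (w j)| * |min |w j| β| ≤ 1 * β :=
          mul_le_mul h1 h2 (abs_nonneg _) one_pos.le
      _ = β := one_mul β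
  · simpa using hβ.le

lemma buildY_normsq {d n : ℕ} (blk : Fin d → Fin n) {β : ℝ} (hβ : 0 < β)
    (w : EuclideanSpace ℝ (Fin d)) (z : Fin n → Bool) :
    ‖w - buildY blk β w z‖^2 = (∑ j : Fin d, (w j)^2) - knapObjBeta blk β w z := by
  rw [normsq, ← decomp blk β w z]
  apply Finset.sum_congr rfl
  intro j _
  have hsub : (w - buildY blk β w z) j = w j - buildY blk β w z j := rfl
  rw [hsub, buildY_apply]
  split
  · exact diff_sq (w j) β hβ
  · simp

lemma buildY_groupC {d n : ℕ} (blk : Fin d → Fin n) (β : ℝ) (w : EuclideanSpace ℝ (Fin d))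
    (z : Fin n → Bool) (p : Fin n → ℝ) (hp : ∀ i, 0 < p i) :
    (∑ i : Fin n, if ∃ j, blk j = i ∧ buildY blk β w z j ≠ 0 then p i else 0)
      ≤ ∑ i : Fin n, if z i then p i else 0 := by
  apply Finset.sum_le_sum
  intro i _
  by_cases h : ∃ j, blk j = i ∧ buildY blk β w z j ≠ 0
  · rw [if_pos h]
    obtain ⟨j, hj, hne⟩ := h
    have hz : z i := by
      by_contra hz
      exact hne (by simp only [buildY_apply, hj, hz, if_false, Bool.false_eq_true])
    rw [if_pos hz]
  · rw [if_neg h]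
    split
    · exact (hp _).le
    · exact le_refl 0

lemma general_lb {d n : ℕ} (blk : Fin d → Fin n) {β : ℝ} (hβ : 0 < β)
    (w y : EuclideanSpace ℝ (Fin d)) (hy : ∀ j, |y j| ≤ β) :
    (∑ j : Fin d, (w j)^2)
      - knapObjBeta blk β w (fun i => decide (∃ j, blk j = i ∧ y j ≠ 0)) ≤ ‖w - y‖^2 := by
  rw [normsq, ← decomp]
  apply Finset.sum_le_sum
  intro j _
  have hsub : (w - y) j = w j - y j := rfl
  rw [hsub]
  by_cases hz : ∃ j', blk j' = blk j ∧ y j' ≠ 0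
  · rw [if_pos (by simpa using hz)]
    exact key_le (w j) (y j) β (hy j)
  · have hyj : y j = 0 := by
      by_contra h
      exact hz ⟨j, rfl, h⟩
    rw [if_neg (by simpa using hz), hyj]
    simp

/-- The set of Euclidean projections of `w` onto `C ∩ B̄_β` equals the set of
points `x` obtained from some optimal solution `z*` of the 0-1 knapsack problem
`max Σ z_i (‖w^i‖₂² − ‖max(|w^i| − β,0)‖₂²)  s.t. Σ z_i p_i ≤ m` by setting, blockwise,
`x^i_j = sgn(w^i_j)·min(|w^i_j|, β)` when `z*_i = 1` and `x^i = 0` when `z*_i = 0`. -/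
theorem projection_onto_C_inter_ball
    (d n : ℕ) (blk : Fin d → Fin n) (hblk : Function.Surjective blk)
    (p : Fin n → ℝ) (hp : ∀ i, 0 < p i) (m : ℝ) (hm : 0 < m)
    (β : ℝ) (hβ : 0 < β) (w : EuclideanSpace ℝ (Fin d)) :
    {x : EuclideanSpace ℝ (Fin d) |
        x ∈ groupC d n blk p m ∩ Binf d β ∧
        ∀ y ∈ groupC d n blk p m ∩ Binf d β, ‖w - x‖ ≤ ‖w - y‖}
      = {x : EuclideanSpace ℝ (Fin d) |
          ∃ z : Fin n → Bool,
            ((∑ i : Fin n, if z i then p i else 0) ≤ m ∧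
              ∀ z' : Fin n → Bool, (∑ i : Fin n, if z' i then p i else 0) ≤ m →
                knapObjBeta blk β w z' ≤ knapObjBeta blk β w z) ∧
            ∀ j : Fin d,
              x j = if z (blk j) then Real.sign (w j) * min |w j| β else 0} := by
  
  classical
  ext x
  simp only [Set.mem_setOf_eq, Set.mem_inter_iff, groupC, Binf]
  constructor
  · rintro ⟨⟨hC, hB⟩, hmin⟩
    set z : Fin n → Bool := fun i => decide (∃ j, blk j = i ∧ x j ≠ 0) with hzdef
    have hbudget : (∑ i : Fin n, if z i then p i else 0) ≤ m := by
      have he : (∑ i : Fin n, if z i then p i else 0)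
          = ∑ i : Fin n, if ∃ j, blk j = i ∧ x j ≠ 0 then p i else 0 :=
        Finset.sum_congr rfl (fun i _ => by simp [hzdef])
      rw [he]; exact hC
    have hlb : (∑ j : Fin d, (w j)^2) - knapObjBeta blk β w z ≤ ‖w - x‖^2 :=
      general_lb blk hβ w x hB
    have hYfeas : ∀ z' : Fin n → Bool, (∑ i : Fin n, if z' i then p i else 0) ≤ m →
        ‖w - x‖^2 ≤ (∑ j : Fin d, (w j)^2) - knapObjBeta blk β w z' := by
      intro z' hz'
      have hYC : (∑ i : Fin n, if ∃ j, blk j = i ∧ buildY blk β w z' j ≠ 0 then p i else 0) ≤ m :=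
        le_trans (buildY_groupC blk β w z' p hp) hz'
      have hle : ‖w - x‖ ≤ ‖w - buildY blk β w z'‖ :=
        hmin _ ⟨hYC, fun j => buildY_binf blk hβ w z' j⟩
      calc ‖w - x‖^2 ≤ ‖w - buildY blk β w z'‖^2 :=
            pow_le_pow_left₀ (norm_nonneg _) hle 2
        _ = (∑ j : Fin d, (w j)^2) - knapObjBeta blk β w z' := buildY_normsq blk hβ w z'
    have hopt : ∀ z' : Fin n → Bool, (∑ i : Fin n, if z' i then p i else 0) ≤ m →
        knapObjBeta blk β w z' ≤ knapObjBeta blk β w z := by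
      intro z' hz'
      have h1 := hYfeas z' hz'
      linarith
    refine ⟨z, ⟨hbudget, hopt⟩, ?_⟩
    -- equality in the sum
    have hub := hYfeas z hbudget
    have hsumeq : ∑ j : Fin d,
        (if z (blk j) then (max (|w j| - β) 0)^2 else (w j)^2)
          = ∑ j : Fin d, (w j - x j)^2 := by
      have hxn : ‖w - x‖^2 = ∑ j : Fin d, (w j - x j)^2 := by
        rw [normsq]; exact Finset.sum_congr rfl (fun j _ => rfl)
      rw [decomp blk β w z]
      rw [← hxn]
      have := decomp blk β w z
      nlinarith [hlb, hub]
    have hterm : ∀ j : Fin d,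
        (if z (blk j) then (max (|w j| - β) 0)^2 else (w j)^2) = (w j - x j)^2 := by
      have hle : ∀ j ∈ (Finset.univ : Finset (Fin d)),
          (if z (blk j) then (max (|w j| - β) 0)^2 else (w j)^2) ≤ (w j - x j)^2 := by
        intro j _
        by_cases hz : ∃ j', blk j' = blk j ∧ x j' ≠ 0
        · rw [if_pos (by simpa [hzdef] using hz)]
          exact key_le (w j) (x j) β (hB j)
        · have hxj : x j = 0 := by
            by_contra h
            exact hz ⟨j, rfl, h⟩
          rw [if_neg (by simpa [hzdef] using hz), hxj]
          simp
      intro j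
      exact (Finset.sum_eq_sum_iff_of_le hle).mp hsumeq j (Finset.mem_univ j)
    intro j
    by_cases hz : z (blk j)
    · rw [if_pos hz]
      have h := hterm j
      rw [if_pos hz] at h
      exact key_eq (w j) (x j) β hβ (hB j) h.symm
    · rw [if_neg hz]
      have hnex : ¬ ∃ j', blk j' = blk j ∧ x j' ≠ 0 := by
        simpa [hzdef] using hz
      by_contra h
      exact hnex ⟨j, rfl, h⟩
  · rintro ⟨z, ⟨hzm, hopt⟩, hx⟩
    have hxY : x = buildY blk β w z := PiLp.ext fun j => hx j
    have hxB : ∀ j, |x j| ≤ β := by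
      rw [hxY]; exact fun j => buildY_binf blk hβ w z j
    have hxC : (∑ i : Fin n, if ∃ j, blk j = i ∧ x j ≠ 0 then p i else 0) ≤ m := by
      rw [hxY]
      exact le_trans (buildY_groupC blk β w z p hp) hzm
    refine ⟨⟨hxC, hxB⟩, ?_⟩
    rintro y ⟨hyC, hyB⟩
    set z' : Fin n → Bool := fun i => decide (∃ j, blk j = i ∧ y j ≠ 0) with hz'def
    have hz'm : (∑ i : Fin n, if z' i then p i else 0) ≤ m := by
      have he : (∑ i : Fin n, if z' i then p i else 0)
          = ∑ i : Fin n, if ∃ j, blk j = i ∧ y j ≠ 0 then p i else 0 :=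
        Finset.sum_congr rfl (fun i _ => by simp [hz'def])
      rw [he]; exact hyC
    have h1 : (∑ j : Fin d, (w j)^2) - knapObjBeta blk β w z' ≤ ‖w - y‖^2 :=
      general_lb blk hβ w y hyB
    have h2 : knapObjBeta blk β w z' ≤ knapObjBeta blk β w z := hopt z' hz'm
    have h3 : ‖w - x‖^2 = (∑ j : Fin d, (w j)^2) - knapObjBeta blk β w z := by
      rw [hxY]; exact buildY_normsq blk hβ w z
    have h4 : ‖w - x‖^2 ≤ ‖w - y‖^2 := by linarith
    nlinarith [norm_nonneg (w - x), norm_nonneg (w - y)]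
end
end
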